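/- Let I_1 = [P_1^ℓ P_1^r, Q_1] be a pointed Tamari interval (a Tamari interval whose lower path carries a distinguished contact, splitting it into the Dyck paths P_1^ℓ and P_1^r) and let I_2 = [P_2, Q_2] be a Tamari interval. Set P = u P_1^ℓ d P_1^r P_2 and Q = u Q_1 d Q_2 (concatenation of words, u an up step, d a down step). Then I = [P,Q] is a Tamari interval, and the map (I_1, I_2) ↦ I is a bijection between pairs consisting of a pointed Tamari interval and a Tamari interval, and Tamari intervals of positive size. Moreover, I_1 is proper (its distinguished contact is not the initial vertex) if and only if the first ascent of P has height larger than 1. -/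

import Mathlib

/-- A step of a lattice path: north or east. -/
inductive Step : Type
  | N : Step
  | E : Step
deriving DecidableEq

/-- Number of north steps of a path. -/
def northCount (w : List Step) : ℕ := (w.filter (fun s => s = Step.N)).length

/-- Number of east steps of a path. -/
def eastCount (w : List Step) : ℕ := (w.filter (fun s => s = Step.E)).length

/-- `w` is an `m`-ballot path: it never goes below the line `x = m y`, and ends on it. -/
def IsBallot (m : ℕ) (w : List Step) : Prop :=
  (∀ k, eastCount (w.take k) ≤ m * northCount (w.take k)) ∧
    eastCount w = m * northCount w

/-- The covering relation of the `m`-Tamari order: `Q` covers `P` when `P` contains an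
east step immediately followed by a north step `b`, and `Q` is obtained from `P` by
swapping the east step and `S`, where `S` is the shortest factor of `P` beginning with
`b` that is a (translated) `m`-ballot path. -/
def TamariCovers (m : ℕ) (P Q : List Step) : Prop :=
  ∃ w₁ S w₂ : List Step,
    S ≠ [] ∧ S.head? = some Step.N ∧ IsBallot m S ∧
    (∀ k, 0 < k → k < S.length → ¬ IsBallot m (S.take k)) ∧
    P = w₁ ++ Step.E :: (S ++ w₂) ∧ Q = w₁ ++ S ++ Step.E :: w₂

/-- The `m`-Tamari order (reflexive–transitive closure of the covering relation). -/
def TamariLE (m : ℕ) : List Step → List Step → Prop :=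
  Relation.ReflTransGen (TamariCovers m)

/-- A Dyck path, written with `N` for up steps and `E` for down steps: every prefix has
at least as many up steps as down steps, and the whole word is balanced.  (This is the
`m = 1` ballot condition.) -/
def IsDyck (w : List Step) : Prop := IsBallot 1 w

/-- A Tamari interval: a pair of Dyck paths `P ≤ Q` in the Tamari order. -/
def IsTamariInterval (P Q : List Step) : Prop :=
  IsDyck P ∧ IsDyck Q ∧ TamariLE 1 P Q

/-- A pointed Tamari interval `[P₁ℓ P₁r, Q₁]`: the lower path carries a distinguished
contact splitting it into the Dyck paths `P₁ℓ` and `P₁r`. -/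
def IsPointedTamariInterval (Pl Pr Q : List Step) : Prop :=
  IsDyck Pl ∧ IsDyck Pr ∧ IsTamariInterval (Pl ++ Pr) Q

/-- The lower path `u P₁ℓ d P₁r P₂` of the recursive construction. -/
def glueLower (Pl Pr P₂ : List Step) : List Step :=
  Step.N :: (Pl ++ Step.E :: (Pr ++ P₂))

/-- The upper path `u Q₁ d Q₂` of the recursive construction. -/
def glueUpper (Q₁ Q₂ : List Step) : List Step :=
  Step.N :: (Q₁ ++ Step.E :: Q₂)

/-- The height of the first ascent of a path (length of its initial run of up steps). -/
def firstAscentHeight (w : List Step) : ℕ :=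
  (w.takeWhile (fun s => decide (s = Step.N))).length

-- ===== height machinery =====
def ht (w : List Step) : ℤ := (northCount w : ℤ) - (eastCount w : ℤ)

@[simp] lemma northCount_nil : northCount ([] : List Step) = 0 := rfl
@[simp] lemma eastCount_nil : eastCount ([] : List Step) = 0 := rfl
@[simp] lemma northCount_cons_N (w) : northCount (Step.N :: w) = northCount w + 1 := by
  simp [northCount, List.filter]
@[simp] lemma northCount_cons_E (w) : northCount (Step.E :: w) = northCount w := by
  simp [northCount, List.filter]
@[simp] lemma eastCount_cons_N (w) : eastCount (Step.N :: w) = eastCount w := by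
  simp [eastCount, List.filter]
@[simp] lemma eastCount_cons_E (w) : eastCount (Step.E :: w) = eastCount w + 1 := by
  simp [eastCount, List.filter]
@[simp] lemma northCount_append (a b : List Step) :
    northCount (a ++ b) = northCount a + northCount b := by
  simp [northCount]
@[simp] lemma eastCount_append (a b : List Step) :
    eastCount (a ++ b) = eastCount a + eastCount b := by
  simp [eastCount]

@[simp] lemma ht_nil : ht ([] : List Step) = 0 := rfl
@[simp] lemma ht_append (a b : List Step) : ht (a ++ b) = ht a + ht b := by
  simp [ht]; ring
@[simp] lemma ht_cons_N (w) : ht (Step.N :: w) = ht w + 1 := by simp [ht]; ring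
@[simp] lemma ht_cons_E (w) : ht (Step.E :: w) = ht w - 1 := by simp [ht]; ring

def Bal (w : List Step) : Prop := ∀ p : List Step, p <+: w → 0 ≤ ht p

lemma isDyck_iff (w : List Step) : IsDyck w ↔ Bal w ∧ ht w = 0 := by
  constructor
  · rintro ⟨h1, h2⟩
    constructor
    · intro p hp
      have hpe : p = w.take p.length := (List.prefix_iff_eq_take.mp hp)
      have h3 := h1 p.length
      rw [← hpe] at h3
      simp [ht]; omega
    · simp [ht]; omega
  · rintro ⟨h1, h2⟩
    constructor
    · intro k
      have := h1 (w.take k) (List.take_prefix k w)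
      simp [ht] at this ⊢; omega
    · simp [ht] at h2 ⊢; omega

lemma bal_of_dyck {w} (h : IsDyck w) : Bal w := ((isDyck_iff w).mp h).1
lemma ht_of_dyck {w} (h : IsDyck w) : ht w = 0 := ((isDyck_iff w).mp h).2

lemma dyck_nil : IsDyck [] := (isDyck_iff []).mpr ⟨fun p hp => by simp [List.prefix_nil.mp hp], rfl⟩

lemma prefix_split {p a b : List Step} (h : p <+: a ++ b) :
    p <+: a ∨ ∃ r, p = a ++ r ∧ r <+: b := by
  obtain ⟨t, ht⟩ := h
  rcases List.append_eq_append_iff.mp ht with ⟨a', rfl, h2⟩ | ⟨c', rfl, h2⟩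
  · exact Or.inl ⟨a', rfl⟩
  · exact Or.inr ⟨c', rfl, ⟨t, h2.symm⟩⟩

lemma split_of_le {A B C D : List Step} (h : A ++ B = C ++ D) (hl : A.length ≤ C.length) :
    ∃ t, C = A ++ t ∧ B = t ++ D := by
  rcases List.append_eq_append_iff.mp h with ⟨a', rfl, h2⟩ | ⟨c', rfl, h2⟩
  · exact ⟨a', rfl, h2⟩
  · have hc : C.length + c'.length ≤ C.length := by
      have := congrArg List.length (rfl : C ++ c' = C ++ c')
      simpa using hl
    have : c'.length = 0 := by omega
    rw [List.length_eq_zero_iff.mp this] at h2 ⊢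
    exact ⟨[], by simp, by simpa using h2.symm⟩

lemma dyck_append {a b : List Step} (ha : IsDyck a) (hb : IsDyck b) : IsDyck (a ++ b) := by
  rw [isDyck_iff] at *
  refine ⟨?_, by simp [ha.2, hb.2]⟩
  intro p hp
  rcases prefix_split hp with h | ⟨r, rfl, hr⟩
  · exact ha.1 p h
  · have := hb.1 r hr
    simp [ha.2]; omega

lemma dyck_left_of_append {a b : List Step} (h : IsDyck (a ++ b)) (hb : ht b = 0) : IsDyck a := by
  rw [isDyck_iff] at *
  have h2 := h.2; simp at h2
  refine ⟨fun p hp => h.1 p (hp.trans (a.prefix_append b)), by omega⟩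

lemma dyck_right_of_append {a b : List Step} (h : IsDyck (a ++ b)) (ha : IsDyck a) : IsDyck b := by
  rw [isDyck_iff] at *
  have h2 := h.2; simp [ha.2] at h2
  refine ⟨fun p hp => ?_, h2⟩
  have := h.1 (a ++ p) ⟨(hp.choose), by rw [List.append_assoc, hp.choose_spec]⟩
  simp [ha.2] at this; omega

lemma head_N_of_dyck {w : List Step} (h : IsDyck w) (hne : w ≠ []) :
    ∃ t, w = Step.N :: t := by
  match w, hne with
  | Step.N :: t, _ => exact ⟨t, rfl⟩
  | Step.E :: t, _ =>
    have := (bal_of_dyck h) [Step.E] ⟨t, rfl⟩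
    simp [ht] at this

-- ===== cover lemmas =====
lemma cover_length {P Q : List Step} (h : TamariCovers 1 P Q) : P.length = Q.length := by
  obtain ⟨w₁, S, w₂, _, _, _, _, rfl, rfl⟩ := h
  simp; omega

lemma le_length {P Q : List Step} (h : TamariLE 1 P Q) : P.length = Q.length := by
  induction h with
  | refl => rfl
  | tail _ h2 ih => exact ih.trans (cover_length h2)

lemma cover_context {P Q : List Step} (a b : List Step) (h : TamariCovers 1 P Q) :
    TamariCovers 1 (a ++ P ++ b) (a ++ Q ++ b) := by
  obtain ⟨w₁, S, w₂, h1, h2, h3, h4, rfl, rfl⟩ := h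
  exact ⟨a ++ w₁, S, w₂ ++ b, h1, h2, h3, h4, by simp, by simp⟩

lemma le_context {P Q : List Step} (a b : List Step) (h : TamariLE 1 P Q) :
    TamariLE 1 (a ++ P ++ b) (a ++ Q ++ b) :=
  Relation.ReflTransGen.lift (fun w => a ++ w ++ b) (fun _ _ hc => cover_context a b hc) _ _ h

lemma cover_reverse_dyck {P Q : List Step} (h : TamariCovers 1 P Q) (hQ : IsDyck Q) :
    IsDyck P := by
  obtain ⟨w₁, S, w₂, hS0, hhd, hSb, hmin, rfl, rfl⟩ := h
  have hSd : IsDyck S := hSb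
  have hSh : ht S = 0 := ht_of_dyck hSd
  rw [isDyck_iff] at hQ ⊢
  have hw₁ : (1:ℤ) ≤ ht w₁ := by
    have := hQ.1 (w₁ ++ S ++ [Step.E]) ⟨w₂, by simp⟩
    simp [hSh] at this; omega
  constructor
  · intro p hp
    rcases prefix_split hp with hpw | ⟨r, rfl, hr⟩
    · exact hQ.1 p (hpw.trans ⟨S ++ Step.E :: w₂, by simp⟩)
    · rcases hr with ⟨t, hrt⟩
      match r, hrt with
      | [], _ => simpa using hQ.1 w₁ ⟨S ++ Step.E :: w₂, by simp⟩
      | Step.E :: r', hrt =>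
        have hr' : r' <+: S ++ w₂ := ⟨t, by simpa using hrt⟩
        rcases prefix_split hr' with hrS | ⟨r'', rfl, hr''⟩
        · have := (bal_of_dyck hSd) r' hrS
          simp; omega
        · have := hQ.1 (w₁ ++ S ++ Step.E :: r'')
            ⟨hr''.choose, by simp [List.append_assoc]; rw [hr''.choose_spec]⟩
          simp [hSh] at this ⊢; omega
  · have := hQ.2; simp [hSh] at this ⊢; omega

-- ===== first return decomposition =====
lemma split_T {T : List Step} (hT1 : ht T = -1) (hT2 : ∀ p, p <+: T → -1 ≤ ht p) :
    ∃ A B, IsDyck A ∧ IsDyck B ∧ T = A ++ Step.E :: B := by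
  have hex : ∃ k, ht (T.take k) = -1 := ⟨T.length, by simpa using hT1⟩
  classical
  let k := Nat.find hex
  have hk : ht (T.take k) = -1 := Nat.find_spec hex
  have hkpos : 0 < k := by
    rcases Nat.eq_zero_or_pos k with h | h
    · rw [h] at hk; simp at hk
    · exact h
  have hmin : ∀ j, j < k → ht (T.take j) ≠ -1 := fun j hj => Nat.find_min hex hj
  set A := T.take (k - 1) with hA
  have hAht : 0 ≤ ht A := by
    have h1 := hT2 A (List.take_prefix _ T)
    have h2 := hmin (k - 1) (by omega)
    rw [← hA] at h2
    omega
  have hklen : k - 1 < T.length := by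
    by_contra hcon
    push_neg at hcon
    have h5 : T.take (k-1) = T := List.take_of_length_le hcon
    rw [hA, h5] at hAht; omega
  obtain ⟨s, B, hsB⟩ : ∃ s B, T.drop (k-1) = s :: B := by
    have : T.drop (k-1) ≠ [] := by
      intro hc; have := List.drop_eq_nil_iff.mp hc; omega
    exact ⟨_, _, (List.exists_cons_of_ne_nil this).choose_spec.choose_spec⟩
  have hTeq : T = A ++ s :: B := by rw [hA, ← hsB, List.take_append_drop]
  have htake : T.take k = A ++ [s] := by
    rw [hTeq, List.take_append]
    have hAlen : A.length = k - 1 := by simp [hA]; omega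
    rw [List.take_of_length_le (by omega), hAlen]
    congr 1
    have : k - (k-1) = 1 := by omega
    rw [this]; simp
  have hsE : s = Step.E := by
    cases s
    · rw [htake] at hk; simp at hk; omega
    · rfl
  subst hsE
  have hA0 : ht A = 0 := by rw [htake] at hk; simp at hk; omega
  refine ⟨A, B, (isDyck_iff A).mpr ⟨?_, hA0⟩, (isDyck_iff B).mpr ⟨?_, ?_⟩, hTeq⟩
  · intro p hp
    have hple : p.length ≤ k - 1 := by
      have := hp.length_le; simp [hA] at this; omega
    have hpT : p <+: T := hp.trans (List.take_prefix _ T)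
    have hpe : p = T.take p.length := List.prefix_iff_eq_take.mp hpT
    have h1 := hT2 p hpT
    have h2 := hmin p.length (by omega)
    rw [← hpe] at h2
    omega
  · intro r hr
    have := hT2 (A ++ Step.E :: r) (by rw [hTeq]; exact ⟨hr.choose, by simp [hr.choose_spec]⟩)
    simp [hA0] at this; omega
  · have := hT1; rw [hTeq] at this; simp [hA0] at this; omega

lemma exists_glue {Q : List Step} (hQ : IsDyck Q) (hne : Q ≠ []) :
    ∃ A B, IsDyck A ∧ IsDyck B ∧ Q = Step.N :: (A ++ Step.E :: B) := by
  obtain ⟨T, rfl⟩ := head_N_of_dyck hQ hne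
  have h0 : ht (Step.N :: T) = 0 := ht_of_dyck hQ
  have hT1 : ht T = -1 := by simp at h0; omega
  have hT2 : ∀ p, p <+: T → -1 ≤ ht p := by
    intro p hp
    have := (bal_of_dyck hQ) (Step.N :: p) (by
      obtain ⟨t, rfl⟩ := hp; exact ⟨t, rfl⟩)
    simp at this; omega
  obtain ⟨A, B, h1, h2, h3⟩ := split_T hT1 hT2
  exact ⟨A, B, h1, h2, by rw [h3]⟩

lemma first_block {R : List Step} (hR : IsDyck R) (hne : R ≠ []) :
    ∃ S R', R = S ++ R' ∧ IsDyck R' ∧ S ≠ [] ∧ S.head? = some Step.N ∧ IsBallot 1 S ∧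
      (∀ k, 0 < k → k < S.length → ¬ IsBallot 1 (S.take k)) := by
  classical
  have hex : ∃ k, 0 < k ∧ ht (R.take k) = 0 :=
    ⟨R.length, List.length_pos_iff.mpr hne, by rw [List.take_length]; exact ht_of_dyck hR⟩
  let k := Nat.find hex
  obtain ⟨hkpos, hk0⟩ : 0 < k ∧ ht (R.take k) = 0 := Nat.find_spec hex
  set S := R.take k with hS
  have hSd : IsDyck S := by
    rw [isDyck_iff]
    refine ⟨fun p hp => (bal_of_dyck hR) p (hp.trans (List.take_prefix _ _)), hk0⟩
  have hRd : R = S ++ R.drop k := by rw [hS, List.take_append_drop]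
  have hlenS : S.length = min k R.length := by simp [hS]
  have hSne : S ≠ [] := by
    apply List.length_pos_iff.mp
    rw [hlenS]
    exact lt_min hkpos (List.length_pos_iff.mpr hne)
  refine ⟨S, R.drop k, hRd, dyck_right_of_append (hRd ▸ hR) hSd, hSne, ?_, hSd, ?_⟩
  · obtain ⟨T, hT⟩ := head_N_of_dyck hR hne
    obtain ⟨s, S', hS'⟩ := List.exists_cons_of_ne_nil hSne
    rw [hS', hT] at hRd
    have : s = Step.N := by
      have := congrArg List.head? hRd
      simpa using this.symm
    rw [hS', this]
    rfl
  · intro j hj0 hjlen hBal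
    have hjk : j < k := by
      have : S.length ≤ k := by simp [hS]
      omega
    have htj : S.take j = R.take j := by
      rw [hS, List.take_take]; congr 1; omega
    have := Nat.find_min hex hjk
    push_neg at this
    have := this hj0
    rw [← htj] at this
    exact this (ht_of_dyck hBal)

-- ===== moving an E across a Dyck factor =====
lemma e_jump_aux : ∀ (n : ℕ) (R : List Step), R.length ≤ n → IsDyck R → ∀ a b : List Step,
    TamariLE 1 (a ++ Step.E :: (R ++ b)) (a ++ (R ++ Step.E :: b)) := by
  intro n
  induction n with
  | zero =>
    intro R hlen _ a b
    have : R = [] := List.length_eq_zero_iff.mp (by omega)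
    subst this
    exact Relation.ReflTransGen.refl
  | succ n ih =>
    intro R hlen hR a b
    rcases eq_or_ne R [] with rfl | hne
    · exact Relation.ReflTransGen.refl
    · obtain ⟨S, R', hRe, hR'd, hS0, hhd, hSb, hmin⟩ := first_block hR hne
      have hcov : TamariCovers 1 (a ++ Step.E :: (R ++ b)) ((a ++ S) ++ Step.E :: (R' ++ b)) :=
        ⟨a, S, R' ++ b, hS0, hhd, hSb, hmin, by rw [hRe]; simp, by simp⟩
      have hrec := ih R' (by
        have hl := congrArg List.length hRe
        have hSlen : 0 < S.length := List.length_pos_iff.mpr hS0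
        simp at hl; omega) hR'd (a ++ S) b
      have hres : TamariLE 1 (a ++ Step.E :: (R ++ b)) ((a ++ S) ++ (R' ++ Step.E :: b)) :=
        Relation.ReflTransGen.head hcov hrec
      have heq : (a ++ S) ++ (R' ++ Step.E :: b) = a ++ (R ++ Step.E :: b) := by
        rw [hRe]; simp
      rwa [heq] at hres

lemma e_jump {R : List Step} (hR : IsDyck R) (a b : List Step) :
    TamariLE 1 (a ++ Step.E :: (R ++ b)) (a ++ (R ++ Step.E :: b)) :=
  e_jump_aux R.length R le_rfl hR a b

lemma prefix_cons {p : List Step} {x : Step} {l : List Step} (h : p <+: x :: l) :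
    p = [] ∨ ∃ p', p = x :: p' ∧ p' <+: l := by
  cases p with
  | nil => exact Or.inl rfl
  | cons y p' =>
    rw [List.cons_prefix_cons] at h
    exact Or.inr ⟨p', by rw [h.1], h.2⟩

lemma dyck_glue {A B : List Step} (hA : IsDyck A) (hB : IsDyck B) :
    IsDyck (Step.N :: (A ++ Step.E :: B)) := by
  rw [isDyck_iff]
  have hA0 := ht_of_dyck hA; have hB0 := ht_of_dyck hB
  constructor
  · intro p hp
    rcases prefix_cons hp with rfl | ⟨p', rfl, hp'⟩
    · simp
    · rcases prefix_split hp' with h | ⟨r, rfl, hr⟩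
      · have := bal_of_dyck hA p' h; simp; omega
      · rcases prefix_cons hr with rfl | ⟨r', rfl, hr'⟩
        · simp [hA0]
        · have := bal_of_dyck hB r' hr'; simp [hA0]; omega
  · simp [hA0, hB0]

lemma key {Q₁ Q₂ : List Step} (hQ₁ : IsDyck Q₁) (hQ₂ : IsDyck Q₂) {P : List Step}
    (h : TamariLE 1 P (glueUpper Q₁ Q₂)) :
    ∃ Pl Pr P₂, IsDyck Pl ∧ IsDyck Pr ∧ IsDyck P₂ ∧ TamariLE 1 (Pl ++ Pr) Q₁ ∧
      TamariLE 1 P₂ Q₂ ∧ P = glueLower Pl Pr P₂ := by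
  induction h using Relation.ReflTransGen.head_induction_on with
  | refl =>
    exact ⟨Q₁, [], Q₂, hQ₁, dyck_nil, hQ₂,
      by rw [List.append_nil]; exact Relation.ReflTransGen.refl, Relation.ReflTransGen.refl, by simp [glueLower, glueUpper]⟩
  | @head a c hcov hle ih =>
    obtain ⟨Pl', Pr', P₂', h1, h2, h3, h4, h5, h6⟩ := ih
    have hcd : IsDyck c := by rw [h6]; exact dyck_glue h1 (dyck_append h2 h3)
    have hPd : IsDyck a := cover_reverse_dyck hcov hcd
    obtain ⟨w₁, S, w₂, hS0, hhd, hSb, hmin, hPe, hce⟩ := hcov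
    have hSd : IsDyck S := hSb
    have hSh : ht S = 0 := ht_of_dyck hSd
    obtain ⟨x, rfl⟩ : ∃ x, w₁ = Step.N :: x := by
      match w₁, hPe with
      | [], hPe =>
        exfalso
        have := bal_of_dyck hPd [Step.E] ⟨S ++ w₂, hPe.symm⟩
        simp at this
      | Step.E :: x, hPe =>
        exfalso
        have := bal_of_dyck hPd [Step.E] ⟨x ++ Step.E :: (S ++ w₂), by rw [hPe]; rfl⟩
        simp at this
      | Step.N :: x, _ => exact ⟨x, rfl⟩
    have eq0 : x ++ (S ++ Step.E :: w₂) = Pl' ++ Step.E :: (Pr' ++ P₂') := by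
      have h7 := hce.symm.trans h6
      simp only [glueLower, List.cons_append, List.append_assoc, List.cons.injEq,
        true_and] at h7
      exact h7
    rcases le_or_gt (x.length + S.length) Pl'.length with hA | hB
    · -- the moved factor lies inside Pl' (or ends exactly at the separating E)
      have eq1 : (x ++ S) ++ Step.E :: w₂ = Pl' ++ Step.E :: (Pr' ++ P₂') := by
        simpa [List.append_assoc] using eq0
      obtain ⟨t, hPl', hw⟩ := split_of_le eq1 (by simpa using hA)
      cases t with
      | nil =>
        rw [List.append_nil] at hPl'
        have hw₂ : w₂ = Pr' ++ P₂' := by simpa using hw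
        refine ⟨x, S ++ Pr', P₂', dyck_left_of_append (hPl' ▸ h1) hSh,
          dyck_append hSd h2, h3, ?_, h5, ?_⟩
        · have hxx : x ++ (S ++ Pr') = Pl' ++ Pr' := by rw [hPl']; simp
          rw [hxx]; exact h4
        · rw [hPe, hw₂]; simp [glueLower]
      | cons s t' =>
        rw [List.cons_append] at hw
        injection hw with hsE hw₂
        subst hsE
        have hcovPl : TamariCovers 1 (x ++ Step.E :: (S ++ t')) Pl' :=
          ⟨x, S, t', hS0, hhd, hSb, hmin, rfl, by rw [hPl']⟩
        refine ⟨x ++ Step.E :: (S ++ t'), Pr', P₂', cover_reverse_dyck hcovPl h1, h2, h3,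
          ?_, h5, ?_⟩
        · refine Relation.ReflTransGen.head ?_ h4
          have := cover_context [] Pr' hcovPl
          simpa using this
        · rw [hPe, hw₂]; simp [glueLower]
    · rcases le_or_gt x.length Pl'.length with hBL | hBR
      · -- the factor straddles the separating E : contradiction
        exfalso
        obtain ⟨s₁, hPl', hrest⟩ := split_of_le eq0 hBL
        have hs₁len : s₁.length < S.length := by
          have := congrArg List.length hPl'; simp at this; omega
        obtain ⟨s₂, hSe, hs₂⟩ := split_of_le hrest.symm (le_of_lt hs₁len)
        cases s₁ with
        | nil =>
          simp only [List.nil_append] at hrest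
          cases S with
          | nil => exact hS0 rfl
          | cons v S' =>
            cases v
            · rw [List.cons_append] at hrest
              injection hrest with h9
              exact Step.noConfusion h9
            · simp at hhd
        | cons u s₁' =>
          have hs₁S : S.take (u :: s₁').length = u :: s₁' := by
            rw [hSe, List.take_left]
          have hballot : IsBallot 1 (u :: s₁') := by
            show IsDyck (u :: s₁')
            rw [isDyck_iff]
            constructor
            · exact fun p hp => bal_of_dyck hSd p (hp.trans ⟨s₂, hSe.symm⟩)
            · have hge : 0 ≤ ht (u :: s₁') := bal_of_dyck hSd _ ⟨s₂, hSe.symm⟩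
              have hx0 : 0 ≤ ht x := bal_of_dyck h1 x ⟨u :: s₁', hPl'.symm⟩
              have hPl0 : ht Pl' = 0 := ht_of_dyck h1
              rw [hPl'] at hPl0; simp at hPl0; omega
          refine hmin _ (by simp) hs₁len ?_
          rw [hs₁S]
          exact hballot
      · -- the moved E lies strictly right of the separating E
        obtain ⟨t, hx, hMt⟩ := split_of_le eq0.symm (le_of_lt hBR)
        cases t with
        | nil =>
          exfalso
          have := congrArg List.length hx; simp at this; omega
        | cons s z =>
          rw [List.cons_append] at hMt
          injection hMt with hsE eq2
          subst hsE
          rcases le_or_gt Pr'.length z.length with hIR | hmid1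
          · -- the factor lies inside P₂'
            obtain ⟨z₂, hz, hP₂'⟩ := split_of_le eq2 hIR
            have hcovP₂ : TamariCovers 1 (z₂ ++ Step.E :: (S ++ w₂)) P₂' :=
              ⟨z₂, S, w₂, hS0, hhd, hSb, hmin, rfl, by rw [hP₂']; simp⟩
            refine ⟨Pl', Pr', z₂ ++ Step.E :: (S ++ w₂), h1, h2,
              cover_reverse_dyck hcovP₂ h3, h4, Relation.ReflTransGen.head hcovP₂ h5, ?_⟩
            rw [hPe, hx, hz]; simp [glueLower]
          · rcases le_or_gt Pr'.length (z.length + S.length) with hmid2 | hB1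
            · -- the factor straddles the contact between Pr' and P₂' : contradiction
              exfalso
              obtain ⟨s₁, hPr', hrest2⟩ := split_of_le eq2.symm (le_of_lt hmid1)
              have hs₁le : s₁.length ≤ S.length := by
                have := congrArg List.length hPr'; simp at this; omega
              obtain ⟨s₂, hSe, hP₂'⟩ := split_of_le hrest2.symm hs₁le
              cases s₂ with
              | nil =>
                have hP₂'' : P₂' = Step.E :: w₂ := by simpa using hP₂'
                have hcontra := bal_of_dyck h3 [Step.E] ⟨w₂, by rw [hP₂'']; rfl⟩
                simp at hcontra
              | cons u s₂' =>
                have hs₁lt : s₁.length < S.length := by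
                  have := congrArg List.length hSe; simp at this; omega
                cases s₁ with
                | nil =>
                  have := congrArg List.length hPr'
                  simp at this
                  omega
                | cons v s₁' =>
                  have hs₁S : S.take (v :: s₁').length = v :: s₁' := by
                    rw [hSe, List.take_left]
                  have hballot : IsBallot 1 (v :: s₁') := by
                    show IsDyck (v :: s₁')
                    rw [isDyck_iff]
                    constructor
                    · exact fun p hp => bal_of_dyck hSd p (hp.trans ⟨u :: s₂', hSe.symm⟩)
                    · have hge : 0 ≤ ht (v :: s₁') := bal_of_dyck hSd _ ⟨u :: s₂', hSe.symm⟩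
                      have hz0 : 0 ≤ ht z := bal_of_dyck h2 z ⟨v :: s₁', hPr'.symm⟩
                      have hPr0 : ht Pr' = 0 := ht_of_dyck h2
                      rw [hPr'] at hPr0; simp at hPr0; omega
                  refine hmin _ (by simp) hs₁lt ?_
                  rw [hs₁S]
                  exact hballot
            · -- the factor lies inside Pr'
              have eq3 : (z ++ S) ++ Step.E :: w₂ = Pr' ++ P₂' := by
                simpa [List.append_assoc] using eq2.symm
              obtain ⟨t₂, hPr', ht₂⟩ := split_of_le eq3 (by simp; omega)
              cases t₂ with
              | nil =>
                exfalso
                have := congrArg List.length hPr'; simp at this; omega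
              | cons u y =>
                rw [List.cons_append] at ht₂
                injection ht₂ with huE hw₂
                subst huE
                have hcovPr : TamariCovers 1 (z ++ Step.E :: (S ++ y)) Pr' :=
                  ⟨z, S, y, hS0, hhd, hSb, hmin, rfl, by rw [hPr']⟩
                refine ⟨Pl', z ++ Step.E :: (S ++ y), P₂', h1,
                  cover_reverse_dyck hcovPr h2, h3, ?_, h5, ?_⟩
                · refine Relation.ReflTransGen.head ?_ h4
                  have := cover_context Pl' [] hcovPr
                  simpa using this
                · rw [hPe, hx, hw₂]; simp [glueLower]

lemma balanced_len_eq {X Y X' Y' : List Step} (hX : IsDyck X) (hX' : IsDyck X')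
    (hE : X ++ Step.E :: Y = X' ++ Step.E :: Y') (hle : X.length ≤ X'.length) :
    X.length = X'.length := by
  by_contra hne
  obtain ⟨t, hX'e, hsnd⟩ := split_of_le hE hle
  cases t with
  | nil => have := congrArg List.length hX'e; simp at this; omega
  | cons u t' =>
    rw [List.cons_append] at hsnd
    injection hsnd with huE
    subst huE
    have hpre : (X ++ [Step.E]) <+: X' := ⟨t', by rw [hX'e]; simp⟩
    have := bal_of_dyck hX' _ hpre
    have hX0 := ht_of_dyck hX
    simp [hX0] at this

lemma balanced_mid_eq {A B A' B' : List Step} (hA : IsDyck A) (hA' : IsDyck A')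
    (h : A ++ Step.E :: B = A' ++ Step.E :: B') : A = A' ∧ B = B' := by
  have hlen : A.length = A'.length := by
    rcases le_total A.length A'.length with hle | hle
    · exact balanced_len_eq hA hA' h hle
    · exact (balanced_len_eq hA' hA h.symm hle).symm
  obtain ⟨e1, e2⟩ := List.append_inj h hlen
  injection e2 with _ e3
  exact ⟨e1, e3⟩

lemma glueUpper_inj {Q₁ Q₂ Q₁' Q₂' : List Step} (h1 : IsDyck Q₁) (h1' : IsDyck Q₁')
    (h : glueUpper Q₁ Q₂ = glueUpper Q₁' Q₂') : Q₁ = Q₁' ∧ Q₂ = Q₂' := by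
  have h' : Q₁ ++ Step.E :: Q₂ = Q₁' ++ Step.E :: Q₂' := by
    simp only [glueUpper, List.cons.injEq, true_and] at h
    exact h
  exact balanced_mid_eq h1 h1' h'

lemma glueLower_inj {Pl Pr P₂ Pl' Pr' P₂' : List Step} (h1 : IsDyck Pl) (h1' : IsDyck Pl')
    (hlen : P₂.length = P₂'.length) (h : glueLower Pl Pr P₂ = glueLower Pl' Pr' P₂') :
    Pl = Pl' ∧ Pr = Pr' ∧ P₂ = P₂' := by
  have h' : Pl ++ Step.E :: (Pr ++ P₂) = Pl' ++ Step.E :: (Pr' ++ P₂') := by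
    simp only [glueLower, List.cons.injEq, true_and] at h
    exact h
  obtain ⟨e1, e2⟩ := balanced_mid_eq h1 h1' h'
  obtain ⟨e3, e4⟩ := List.append_inj' e2 hlen
  exact ⟨e1, e3, e4⟩

/-- **Recursive decomposition of Tamari intervals.**  Given a pointed Tamari interval
`I₁ = [P₁ℓ P₁r, Q₁]` and a Tamari interval `I₂ = [P₂, Q₂]`, the pair
`I = [u P₁ℓ d P₁r P₂, u Q₁ d Q₂]` is a Tamari interval; the map `(I₁, I₂) ↦ I` is a
bijection onto Tamari intervals of positive size; and `I₁` is proper (i.e. `P₁ℓ ≠ ∅`)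
if and only if the first ascent of the lower path of `I` has height larger than `1`. -/
theorem tamari_interval_decomposition :
    (∀ Pl Pr Q₁ P₂ Q₂ : List Step,
        IsPointedTamariInterval Pl Pr Q₁ → IsTamariInterval P₂ Q₂ →
        IsTamariInterval (glueLower Pl Pr P₂) (glueUpper Q₁ Q₂)) ∧
      (∀ P Q : List Step, IsTamariInterval P Q → 0 < northCount P →
        ∃! x : (List Step × List Step × List Step) × (List Step × List Step),
          IsPointedTamariInterval x.1.1 x.1.2.1 x.1.2.2 ∧
            IsTamariInterval x.2.1 x.2.2 ∧
            glueLower x.1.1 x.1.2.1 x.2.1 = P ∧ glueUpper x.1.2.2 x.2.2 = Q) ∧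
      (∀ Pl Pr Q₁ P₂ Q₂ : List Step,
        IsPointedTamariInterval Pl Pr Q₁ → IsTamariInterval P₂ Q₂ →
        (Pl ≠ [] ↔ 1 < firstAscentHeight (glueLower Pl Pr P₂))) := by
  refine ⟨?_, ?_, ?_⟩
  · rintro Pl Pr Q₁ P₂ Q₂ ⟨hPl, hPr, _, hQ₁, hle1⟩ ⟨hP₂, hQ₂, hle2⟩
    refine ⟨dyck_glue hPl (dyck_append hPr hP₂), dyck_glue hQ₁ hQ₂, ?_⟩
    have t1 : TamariLE 1 (glueLower Pl Pr P₂) (Step.N :: (Pl ++ Step.E :: (Pr ++ Q₂))) := by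
      have := le_context (Step.N :: (Pl ++ Step.E :: Pr)) [] hle2
      simpa [glueLower] using this
    have t2 : TamariLE 1 (Step.N :: (Pl ++ Step.E :: (Pr ++ Q₂)))
        (Step.N :: ((Pl ++ Pr) ++ Step.E :: Q₂)) := by
      have := e_jump hPr (Step.N :: Pl) Q₂
      simpa [List.append_assoc] using this
    have t3 : TamariLE 1 (Step.N :: ((Pl ++ Pr) ++ Step.E :: Q₂)) (glueUpper Q₁ Q₂) := by
      have := le_context [Step.N] (Step.E :: Q₂) hle1
      simpa [glueUpper] using this
    exact t1.trans (t2.trans t3)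
  · rintro P Q ⟨hP, hQ, hle⟩ hpos
    have hPne : P ≠ [] := by
      intro hc; rw [hc] at hpos; simp [northCount] at hpos
    have hQne : Q ≠ [] := by
      intro hc
      have := le_length hle
      rw [hc] at this
      simp at this
      exact hPne this
    obtain ⟨Q₁, Q₂, hQ₁, hQ₂, hQe⟩ := exists_glue hQ hQne
    have hQe' : Q = glueUpper Q₁ Q₂ := hQe
    obtain ⟨Pl, Pr, P₂, k1, k2, k3, k4, k5, k6⟩ := key hQ₁ hQ₂ (hQe' ▸ hle)
    refine ⟨⟨⟨Pl, Pr, Q₁⟩, ⟨P₂, Q₂⟩⟩,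
      ⟨⟨k1, k2, dyck_append k1 k2, hQ₁, k4⟩, ⟨k3, hQ₂, k5⟩, k6.symm, hQe'.symm⟩, ?_⟩
    rintro ⟨⟨Pl', Pr', Q₁'⟩, ⟨P₂', Q₂'⟩⟩ ⟨⟨j1, j2, _, j4, j5⟩, ⟨j6, j7, j8⟩, j9, j10⟩
    obtain ⟨e1, e2⟩ := glueUpper_inj j4 hQ₁ (j10.trans hQe')
    subst e1; subst e2
    have hlenP₂ : P₂'.length = P₂.length := by
      have f1 := le_length j8
      have f2 := le_length k5
      exact f1.trans f2.symm
    obtain ⟨e3, e4, e5⟩ := glueLower_inj j1 k1 hlenP₂ (j9.trans k6)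
    subst e3; subst e4; subst e5
    rfl
  · rintro Pl Pr Q₁ P₂ Q₂ ⟨hPl, hPr, hI⟩ hI2
    constructor
    · intro hne
      obtain ⟨t, rfl⟩ := head_N_of_dyck hPl hne
      simp [glueLower, firstAscentHeight, List.takeWhile_cons]
    · intro h1 hc
      subst hc
      simp [glueLower, firstAscentHeight, List.takeWhile_cons] at h1
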